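/- For $n \ge 2$, the number of lattice points $u \in \mathbb{Z}_{\ge 0}^n$ with $\sum_{i=1}^n u_i/a_i < 1$ is strictly greater than $\prod_{i=1}^n a_i / n!$ for all positive reals $a_1,\dots,a_n$. -/

import Mathlib

open Finset

/-- The finset of lattice points below the hyperplane. -/
noncomputable def latt (n : ℕ) (a : Fin n → ℝ) : Finset (Fin n → ℕ) := by
  classical
  exact (Fintype.piFinset fun i => Finset.range ⌈a i⌉₊).filter
    (fun u => ∑ i, (u i : ℝ) / a i < 1)

lemma mem_latt {n : ℕ} {a : Fin n → ℝ} (ha : ∀ i, 0 < a i) (u : Fin n → ℕ) :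
    u ∈ latt n a ↔ ∑ i, (u i : ℝ) / a i < 1 := by
  classical
  unfold latt
  simp only [Finset.mem_filter, Fintype.mem_piFinset, Finset.mem_range]
  constructor
  · rintro ⟨-, h⟩; exact h
  · intro h
    refine ⟨fun i => ?_, h⟩
    rw [Nat.lt_ceil]
    rw [← div_lt_one (ha i)]
    calc (u i : ℝ) / a i ≤ ∑ j, (u j : ℝ) / a j := by
          apply Finset.single_le_sum (f := fun j => (u j : ℝ) / a j)
          · intro j _; exact div_nonneg (Nat.cast_nonneg _) (ha j).le
          · exact Finset.mem_univ i
      _ < 1 := h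

/-- Key algebraic inequality: `a * (x^(m+1) - y^(m+1)) ≤ (m+1) * x^m`. -/
lemma key_ineq (m : ℕ) {a x y : ℝ} (hy : 0 ≤ y) (hyx : y ≤ x) (ha : 0 ≤ a)
    (haxy : a * (x - y) ≤ 1) :
    a * (x ^ (m + 1) - y ^ (m + 1)) ≤ (m + 1) * x ^ m := by
  have hx : 0 ≤ x := hy.trans hyx
  have hgeo := geom_sum₂_mul x y (m + 1)
  have hS : (∑ i ∈ range (m + 1), x ^ i * y ^ (m + 1 - 1 - i)) ≤ (m + 1) * x ^ m := by
    calc (∑ i ∈ range (m + 1), x ^ i * y ^ (m + 1 - 1 - i))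
        ≤ ∑ i ∈ range (m + 1), x ^ m := by
          apply Finset.sum_le_sum
          intro i hi
          simp only [Finset.mem_range] at hi
          calc x ^ i * y ^ (m - i) ≤ x ^ i * x ^ (m - i) := by
                apply mul_le_mul_of_nonneg_left (pow_le_pow_left₀ hy hyx _) (by positivity)
            _ = x ^ m := by rw [← pow_add]; congr 1; omega
      _ = (m + 1) * x ^ m := by rw [Finset.sum_const, card_range, nsmul_eq_mul]; push_cast; ring
  have hSnn : (0:ℝ) ≤ ∑ i ∈ range (m + 1), x ^ i * y ^ (m + 1 - 1 - i) := by
    apply Finset.sum_nonneg; intro i _; positivity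
  calc a * (x ^ (m + 1) - y ^ (m + 1))
      = (a * (x - y)) * (∑ i ∈ range (m + 1), x ^ i * y ^ (m + 1 - 1 - i)) := by
        rw [← hgeo]; ring
    _ ≤ 1 * ((m + 1) * x ^ m) := by
        apply mul_le_mul haxy hS hSnn (by norm_num)
    _ = (m + 1) * x ^ m := one_mul _

/-- Strict version for `x = 1`, `y < 1`, `m ≥ 1`. -/
lemma key_ineq_strict (m : ℕ) (hm : 1 ≤ m) {a y : ℝ} (hy : 0 ≤ y) (hy1 : y < 1)
    (ha : 0 ≤ a) (haxy : a * (1 - y) ≤ 1) :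
    a * (1 ^ (m + 1) - y ^ (m + 1)) < (m + 1) * 1 ^ m := by
  have hgeo := geom_sum₂_mul (1:ℝ) y (m + 1)
  have hSnn : (0:ℝ) ≤ ∑ i ∈ range (m + 1), 1 ^ i * y ^ (m + 1 - 1 - i) := by
    apply Finset.sum_nonneg; intro i _; positivity
  have hS : (∑ i ∈ range (m + 1), (1:ℝ) ^ i * y ^ (m + 1 - 1 - i)) < m + 1 := by
    have : ∀ i ∈ range (m + 1), (1:ℝ) ^ i * y ^ (m + 1 - 1 - i) ≤ 1 := by
      intro i hi
      rw [one_pow, one_mul]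
      exact pow_le_one₀ hy hy1.le
    calc (∑ i ∈ range (m + 1), (1:ℝ) ^ i * y ^ (m + 1 - 1 - i))
        < ∑ _i ∈ range (m + 1), (1:ℝ) := by
          apply Finset.sum_lt_sum this
          refine ⟨0, Finset.mem_range.2 (by omega), ?_⟩
          rw [one_pow, one_mul]
          simp only [Nat.add_sub_cancel, Nat.sub_zero]
          exact pow_lt_one₀ hy hy1 (by omega)
      _ = m + 1 := by rw [Finset.sum_const, card_range, nsmul_eq_mul]; push_cast; ring
  calc a * (1 ^ (m + 1) - y ^ (m + 1))
      = (a * (1 - y)) * (∑ i ∈ range (m + 1), (1:ℝ) ^ i * y ^ (m + 1 - 1 - i)) := by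
        rw [← hgeo]; ring
    _ ≤ 1 * (∑ i ∈ range (m + 1), (1:ℝ) ^ i * y ^ (m + 1 - 1 - i)) := by
        apply mul_le_mul_of_nonneg_right haxy hSnn
    _ = _ := one_mul _
    _ < m + 1 := hS
    _ = (m + 1) * 1 ^ m := by rw [one_pow, mul_one]

/-- the cutoff sequence -/
noncomputable def xs (a : ℝ) (k : ℕ) : ℝ := max (1 - k / a) 0

lemma xs_zero (a : ℝ) (ha : 0 < a) : xs a 0 = 1 := by
  unfold xs; simp

lemma xs_ceil (a : ℝ) (ha : 0 < a) : xs a ⌈a⌉₊ = 0 := by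
  unfold xs
  have : (1 : ℝ) - ⌈a⌉₊ / a ≤ 0 := by
    have h := Nat.le_ceil a
    rw [sub_nonpos, le_div_iff₀ ha, one_mul]
    exact h
  simp [max_eq_right this]

lemma xs_nonneg (a : ℝ) (k : ℕ) : 0 ≤ xs a k := le_max_right _ _

lemma xs_anti (a : ℝ) (ha : 0 < a) (k : ℕ) : xs a (k + 1) ≤ xs a k := by
  unfold xs
  apply max_le_max _ le_rfl
  apply sub_le_sub_left
  gcongr
  push_cast; linarith

lemma xs_diff_le (a : ℝ) (ha : 0 < a) (k : ℕ) : a * (xs a k - xs a (k + 1)) ≤ 1 := by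
  have habs : xs a k - xs a (k + 1) ≤ 1 / a := by
    unfold xs
    calc max (1 - (k:ℝ)/a) 0 - max (1 - ((k+1:ℕ):ℝ)/a) 0
        ≤ |max (1 - (k:ℝ)/a) 0 - max (1 - ((k+1:ℕ):ℝ)/a) 0| := le_abs_self _
      _ ≤ |(1 - (k:ℝ)/a) - (1 - ((k+1:ℕ):ℝ)/a)| := abs_max_sub_max_le_abs _ _ _
      _ = 1/a := by
          push_cast
          rw [show (1 - (k:ℝ)/a) - (1 - ((k:ℝ)+1)/a) = 1/a by field_simp; ring]
          rw [abs_of_pos (by positivity)]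
  calc a * (xs a k - xs a (k + 1)) ≤ a * (1 / a) := by
        exact mul_le_mul_of_nonneg_left habs ha.le
    _ = 1 := by field_simp

lemma xs_eq (a : ℝ) (ha : 0 < a) {k : ℕ} (hk : (k : ℝ) < a) : xs a k = 1 - k / a := by
  unfold xs
  apply max_eq_left
  rw [sub_nonneg, div_le_one ha]
  exact hk.le

lemma tele_sum (m : ℕ) (a : ℝ) (ha : 0 < a) :
    a / (m + 1) ≤ ∑ k ∈ range ⌈a⌉₊, (1 - (k:ℝ) / a) ^ m := by
  have key : ∀ k ∈ range ⌈a⌉₊,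
      a / (m+1) * (xs a k ^ (m+1) - xs a (k+1) ^ (m+1)) ≤ (1 - (k:ℝ)/a) ^ m := by
    intro k hk
    rw [Finset.mem_range, Nat.lt_ceil] at hk
    rw [← xs_eq a ha hk]
    rw [div_mul_eq_mul_div, div_le_iff₀ (by positivity)]
    have := key_ineq m (xs_nonneg a (k+1)) (xs_anti a ha k) ha.le (xs_diff_le a ha k)
    calc a * (xs a k ^ (m+1) - xs a (k+1) ^ (m+1)) ≤ (m+1) * xs a k ^ m := this
      _ = xs a k ^ m * (m+1) := by ring
  calc a / (m+1)
      = a / (m+1) * (xs a 0 ^ (m+1) - xs a ⌈a⌉₊ ^ (m+1)) := by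
        rw [xs_zero a ha, xs_ceil a ha, one_pow, zero_pow (by omega), sub_zero, mul_one]
    _ = ∑ k ∈ range ⌈a⌉₊, a / (m+1) * (xs a k ^ (m+1) - xs a (k+1) ^ (m+1)) := by
        rw [← Finset.mul_sum, Finset.sum_range_sub' (fun k => xs a k ^ (m+1))]
    _ ≤ ∑ k ∈ range ⌈a⌉₊, (1 - (k:ℝ)/a) ^ m := Finset.sum_le_sum key

lemma tele_sum_strict (m : ℕ) (hm : 1 ≤ m) (a : ℝ) (ha : 0 < a) :
    a / (m + 1) < ∑ k ∈ range ⌈a⌉₊, (1 - (k:ℝ) / a) ^ m := by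
  have key : ∀ k ∈ range ⌈a⌉₊,
      a / (m+1) * (xs a k ^ (m+1) - xs a (k+1) ^ (m+1)) ≤ (1 - (k:ℝ)/a) ^ m := by
    intro k hk
    rw [Finset.mem_range, Nat.lt_ceil] at hk
    rw [← xs_eq a ha hk]
    rw [div_mul_eq_mul_div, div_le_iff₀ (by positivity)]
    have := key_ineq m (xs_nonneg a (k+1)) (xs_anti a ha k) ha.le (xs_diff_le a ha k)
    calc a * (xs a k ^ (m+1) - xs a (k+1) ^ (m+1)) ≤ (m+1) * xs a k ^ m := this
      _ = xs a k ^ m * (m+1) := by ring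
  have h0mem : 0 ∈ range ⌈a⌉₊ := by
    rw [Finset.mem_range, Nat.lt_ceil]; exact_mod_cast ha
  have key0 : a / (m+1) * (xs a 0 ^ (m+1) - xs a 1 ^ (m+1)) < (1 - (0:ℝ)/a) ^ m := by
    have h1lt : xs a 1 < 1 := by
      unfold xs
      rw [max_lt_iff]
      constructor
      · have : (0:ℝ) < (1:ℕ)/a := by positivity
        linarith
      · norm_num
    have hd := xs_diff_le a ha 0
    rw [xs_zero a ha] at hd
    have := key_ineq_strict m hm (xs_nonneg a 1) h1lt ha.le hd
    rw [xs_zero a ha]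
    rw [div_mul_eq_mul_div, div_lt_iff₀ (by positivity)]
    calc a * (1 ^ (m+1) - xs a 1 ^ (m+1)) < (m+1) * 1 ^ m := this
      _ = (1 - (0:ℝ)/a) ^ m * (m+1) := by norm_num
  calc a / (m+1)
      = a / (m+1) * (xs a 0 ^ (m+1) - xs a ⌈a⌉₊ ^ (m+1)) := by
        rw [xs_zero a ha, xs_ceil a ha, one_pow, zero_pow (by omega), sub_zero, mul_one]
    _ = ∑ k ∈ range ⌈a⌉₊, a / (m+1) * (xs a k ^ (m+1) - xs a (k+1) ^ (m+1)) := by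
        rw [← Finset.mul_sum, Finset.sum_range_sub' (fun k => xs a k ^ (m+1))]
    _ < ∑ k ∈ range ⌈a⌉₊, (1 - (k:ℝ)/a) ^ m := by
        apply Finset.sum_lt_sum key
        refine ⟨0, h0mem, ?_⟩
        rw [xs_zero a ha] at key0 ⊢
        simpa using key0

/-- Recursion: splitting on the first coordinate. -/
lemma latt_card_succ (n : ℕ) (a : Fin (n+1) → ℝ) (ha : ∀ i, 0 < a i) :
    (latt (n+1) a).card
      = ∑ k ∈ range ⌈a 0⌉₊,
          (latt n (fun i => (1 - (k:ℝ) / a 0) * a i.succ)).card := by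
  classical
  have hmap : ∀ u ∈ latt (n+1) a, u 0 ∈ range ⌈a 0⌉₊ := by
    intro u hu
    rw [mem_latt ha] at hu
    rw [Finset.mem_range, Nat.lt_ceil, ← div_lt_one (ha 0)]
    calc (u 0 : ℝ) / a 0 ≤ ∑ j, (u j : ℝ) / a j := by
          apply Finset.single_le_sum (f := fun j => (u j : ℝ) / a j)
          · intro j _; exact div_nonneg (Nat.cast_nonneg _) (ha j).le
          · exact Finset.mem_univ 0
      _ < 1 := hu
  rw [Finset.card_eq_sum_card_fiberwise hmap]
  apply Finset.sum_congr rfl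
  intro k hk
  rw [Finset.mem_range, Nat.lt_ceil] at hk
  have hc : (0:ℝ) < 1 - (k:ℝ) / a 0 := by
    rw [sub_pos, div_lt_one (ha 0)]; exact hk
  have ha' : ∀ i : Fin n, 0 < (1 - (k:ℝ) / a 0) * a i.succ :=
    fun i => mul_pos hc (ha i.succ)
  -- condition transfer
  have cond : ∀ u : Fin (n+1) → ℕ, u 0 = k →
      ((∑ i, (u i : ℝ) / a i < 1) ↔
        (∑ i : Fin n, (u i.succ : ℝ) / ((1 - (k:ℝ)/a 0) * a i.succ) < 1)) := by
    intro u hu0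
    rw [Fin.sum_univ_succ, hu0]
    have : ∀ i : Fin n, (u i.succ : ℝ) / ((1 - (k:ℝ)/a 0) * a i.succ)
        = ((u i.succ : ℝ) / a i.succ) / (1 - (k:ℝ)/a 0) := by
      intro i; field_simp
    rw [Finset.sum_congr rfl (fun i _ => this i), ← Finset.sum_div,
      div_lt_one hc]
    constructor <;> intro h <;> linarith
  refine Finset.card_bij' (fun u _ => Fin.tail u)
    (fun v _ => Fin.cons k v) ?hi ?hj ?hleft ?hright
  case hi =>
    intro u hu
    simp only [Finset.mem_filter] at hu
    obtain ⟨hu1, hu2⟩ := hu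
    rw [mem_latt ha] at hu1
    rw [mem_latt ha']
    have := (cond u hu2).mp hu1
    convert this using 2
    rfl
  case hj =>
    intro v hv
    rw [mem_latt ha'] at hv
    simp only [Finset.mem_filter]
    constructor
    · rw [mem_latt ha]
      rw [cond (Fin.cons k v) (by simp)]
      simpa [Fin.tail] using hv
    · simp
  case hleft =>
    intro u hu
    simp only [Finset.mem_filter] at hu
    funext i
    refine Fin.cases ?_ (fun j => ?_) i
    · simp [hu.2]
    · simp [Fin.tail]
  case hright =>
    intro v hv
    funext j
    simp [Fin.tail]

/-- Weak inequality for all `n`. -/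
lemma latt_card_ge (n : ℕ) : ∀ (a : Fin n → ℝ), (∀ i, 0 < a i) →
    (∏ i, a i) / (Nat.factorial n : ℝ) ≤ ((latt n a).card : ℝ) := by
  induction n with
  | zero =>
    intro a ha
    have : (latt 0 a).Nonempty := ⟨(fun i => i.elim0), by rw [mem_latt ha]; simp⟩
    have h1 : 1 ≤ (latt 0 a).card := Finset.card_pos.mpr this
    simp only [Finset.univ_eq_empty, Finset.prod_empty, Nat.factorial_zero, Nat.cast_one,
      div_one]
    exact_mod_cast h1
  | succ n ih =>
    intro a ha
    rw [latt_card_succ n a ha]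
    push_cast
    have step : ∀ k ∈ range ⌈a 0⌉₊,
        (1 - (k:ℝ)/a 0) ^ n * ((∏ i : Fin n, a i.succ) / (Nat.factorial n : ℝ))
          ≤ ((latt n (fun i => (1 - (k:ℝ)/a 0) * a i.succ)).card : ℝ) := by
      intro k hk
      rw [Finset.mem_range, Nat.lt_ceil] at hk
      have hc : (0:ℝ) < 1 - (k:ℝ) / a 0 := by
        rw [sub_pos, div_lt_one (ha 0)]; exact hk
      have := ih (fun i => (1 - (k:ℝ)/a 0) * a i.succ) (fun i => mul_pos hc (ha i.succ))
      calc (1 - (k:ℝ)/a 0) ^ n * ((∏ i : Fin n, a i.succ) / (Nat.factorial n : ℝ))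
          = (∏ i : Fin n, (1 - (k:ℝ)/a 0) * a i.succ) / (Nat.factorial n : ℝ) := by
            rw [Finset.prod_mul_distrib, Finset.prod_const, Finset.card_univ,
              Fintype.card_fin, mul_div_assoc]
        _ ≤ _ := this
    calc (∏ i, a i) / (Nat.factorial (n+1) : ℝ)
        = (a 0 / (n + 1)) * ((∏ i : Fin n, a i.succ) / (Nat.factorial n : ℝ)) := by
          rw [Fin.prod_univ_succ, Nat.factorial_succ]
          push_cast
          field_simp
          all_goals ring
      _ ≤ (∑ k ∈ range ⌈a 0⌉₊, (1 - (k:ℝ)/a 0) ^ n)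
            * ((∏ i : Fin n, a i.succ) / (Nat.factorial n : ℝ)) := by
          apply mul_le_mul_of_nonneg_right (tele_sum n (a 0) (ha 0))
          exact div_nonneg (Finset.prod_nonneg fun i _ => (ha i.succ).le) (Nat.cast_nonneg _)
      _ = ∑ k ∈ range ⌈a 0⌉₊,
            (1 - (k:ℝ)/a 0) ^ n * ((∏ i : Fin n, a i.succ) / (Nat.factorial n : ℝ)) := by
          rw [Finset.sum_mul]
      _ ≤ ∑ k ∈ range ⌈a 0⌉₊,
            ((latt n (fun i => (1 - (k:ℝ)/a 0) * a i.succ)).card : ℝ) :=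
          Finset.sum_le_sum step

theorem stmt2 (n : ℕ) (hn : 2 ≤ n) (a : Fin n → ℝ) (ha : ∀ i, 0 < a i) :
    ∃ S : Finset (Fin n → ℕ),
      (∀ u : Fin n → ℕ, u ∈ S ↔ ∑ i, (u i : ℝ) / a i < 1) ∧
      (∏ i, a i) / (Nat.factorial n : ℝ) < (S.card : ℝ) := by
  obtain ⟨m, rfl⟩ : ∃ m, n = m + 1 := ⟨n - 1, by omega⟩
  have hm : 1 ≤ m := by omega
  refine ⟨latt (m+1) a, fun u => mem_latt ha u, ?_⟩
  rw [latt_card_succ m a ha]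
  push_cast
  have step : ∀ k ∈ range ⌈a 0⌉₊,
      (1 - (k:ℝ)/a 0) ^ m * ((∏ i : Fin m, a i.succ) / (Nat.factorial m : ℝ))
        ≤ ((latt m (fun i => (1 - (k:ℝ)/a 0) * a i.succ)).card : ℝ) := by
    intro k hk
    rw [Finset.mem_range, Nat.lt_ceil] at hk
    have hc : (0:ℝ) < 1 - (k:ℝ) / a 0 := by
      rw [sub_pos, div_lt_one (ha 0)]; exact hk
    have := latt_card_ge m (fun i => (1 - (k:ℝ)/a 0) * a i.succ)
      (fun i => mul_pos hc (ha i.succ))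
    calc (1 - (k:ℝ)/a 0) ^ m * ((∏ i : Fin m, a i.succ) / (Nat.factorial m : ℝ))
        = (∏ i : Fin m, (1 - (k:ℝ)/a 0) * a i.succ) / (Nat.factorial m : ℝ) := by
          rw [Finset.prod_mul_distrib, Finset.prod_const, Finset.card_univ,
            Fintype.card_fin, mul_div_assoc]
      _ ≤ _ := this
  calc (∏ i, a i) / (Nat.factorial (m+1) : ℝ)
      = (a 0 / (m + 1)) * ((∏ i : Fin m, a i.succ) / (Nat.factorial m : ℝ)) := by
        rw [Fin.prod_univ_succ, Nat.factorial_succ]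
        push_cast
        field_simp
        all_goals ring
    _ < (∑ k ∈ range ⌈a 0⌉₊, (1 - (k:ℝ)/a 0) ^ m)
          * ((∏ i : Fin m, a i.succ) / (Nat.factorial m : ℝ)) := by
        apply mul_lt_mul_of_pos_right (tele_sum_strict m hm (a 0) (ha 0))
        apply div_pos (Finset.prod_pos fun i _ => ha i.succ)
        exact_mod_cast Nat.factorial_pos m
    _ = ∑ k ∈ range ⌈a 0⌉₊,
          (1 - (k:ℝ)/a 0) ^ m * ((∏ i : Fin m, a i.succ) / (Nat.factorial m : ℝ)) := by
        rw [Finset.sum_mul]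
    _ ≤ ∑ k ∈ range ⌈a 0⌉₊,
          ((latt m (fun i => (1 - (k:ℝ)/a 0) * a i.succ)).card : ℝ) :=
        Finset.sum_le_sum step
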